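/- With g_{i,δ} as in the Rademacher graphon construction, for all i ≠ i' and δ, δ' ∈ (0,1), the L¹ distance satisfies ‖g_{i,δ} − g_{i',δ'}‖₁ > (δ + δ')/18. -/

import Mathlib

open MeasureTheory Set
open scoped Classical

noncomputable section

/-- For `z ∈ [0,1)`, `brk z` is the smallest `k` with `z + 2^{-k} < 1`. -/
def brk (z : ℝ) : ℕ := sInf {k : ℕ | z + (1/2 : ℝ) ^ k < 1}

/-- The eight parts of the Rademacher graphon, as subintervals of `[0,1]`;
all have length `1/9` except `pC`, of length `2/9`. -/
def pA : Set ℝ := Ico 0 (1/9)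
def pA' : Set ℝ := Ico (1/9) (2/9)
def pB : Set ℝ := Ico (2/9) (3/9)
def pB' : Set ℝ := Ico (3/9) (4/9)
def pB'' : Set ℝ := Ico (4/9) (5/9)
def pC : Set ℝ := Ico (5/9) (7/9)
def pC' : Set ℝ := Ico (7/9) (8/9)
def pD : Set ℝ := Ico (8/9) 1

/-- One-sided description of the Rademacher graphon; coordinates inside each part are
relative positions (`9*x - …`, and `(9*x-5)/2` inside `pC`). -/
def WRo (x y : ℝ) : ℝ :=
  if x ∈ pA ∧ y ∈ pA then (if brk (9*x) ≠ brk (9*y) then 1 else 0)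
  else if x ∈ pA' ∧ y ∈ pA' then (if brk (9*x-1) ≠ brk (9*y-1) then 1 else 0)
  else if x ∈ pA ∧ y ∈ pA' then (if brk (9*x) = brk (9*y-1) then 1 else 0)
  else if x ∈ pA ∧ y ∈ pB then (if 9*x + (9*y-2) ≤ 1 then 1 else 0)
  else if x ∈ pA ∧ y ∈ pB'' then (if 1 ≤ 9*x + (9*y-4) then 1 else 0)
  else if x ∈ pA' ∧ y ∈ pB' then (if (9*x-1) + (9*y-3) ≤ 1 then 1 else 0)
  else if x ∈ pA' ∧ y ∈ pB'' then (if 9*y-4 ≤ 9*x-1 then 1 else 0)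
  else if x ∈ pB ∧ y ∈ pB then (if 1 ≤ (9*x-2) + (9*y-2) then 1 else 0)
  else if x ∈ pB' ∧ y ∈ pB' then (if 1 ≤ (9*x-3) + (9*y-3) then 1 else 0)
  else if x ∈ pA ∧ y ∈ pC then
    (if Even ⌊(9*y-5)/2 * (2:ℝ) ^ brk (9*x)⌋ then 1 else 0)
  else if x ∈ pA' ∧ y ∈ pC' then
    (if (1 - (1/2:ℝ) ^ brk (9*x-1) - (9*x-1)) * (2:ℝ) ^ brk (9*x-1) + (9*y-7) ≤ 1
      then 1 else 0)
  else if x ∈ pC' ∧ y ∈ pC' then (if 1 ≤ (9*x-7) + (9*y-7) then 1 else 0)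
  else if x ∈ pA' ∧ y ∈ pC then
    (if Even ⌊(9*y-5)/2 * (2:ℝ) ^ brk (9*x-1)⌋
      then (1 - (1/2:ℝ) ^ brk (9*x-1) - (9*x-1)) * (2:ℝ) ^ brk (9*x-1) else 0)
  else if x ∈ pC ∧ y ∈ pC then (if 1 ≤ (9*x-5)/2 + (9*y-5)/2 then 3/4 else 0)
  else if (x ∈ pA' ∨ x ∈ pB') ∧ y ∈ pD then 0.2
  else if x ∈ pB'' ∧ y ∈ pD then 0.4
  else if x ∈ pC' ∧ y ∈ pD then 0.8
  else 0

/-- The Rademacher graphon `W_R` (symmetrization of `WRo`; for each pair at most one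
order matches a case, and all values are nonnegative). -/
def WR (x y : ℝ) : ℝ := max (WRo x y) (WRo y x)

end
noncomputable section

/-- The limit function `g` from Proposition: `1` on `A' ∪ B'' ∪ C'`, `0.2` on `D`, else `0`. -/
def gLim : ℝ → ℝ := fun x =>
  if x ∈ pA' ∪ pB'' ∪ pC' then 1 else if x ∈ pD then 0.2 else 0

/-- The functions `g_{i,δ}` from the Rademacher graphon construction
(coordinates inside parts are relative positions). -/
def gFam (i : ℕ) (δ : ℝ) : ℝ → ℝ := fun x =>
  if x ∈ pA then (if brk (9*x) = i then 1 else 0)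
  else if x ∈ pA' then (if brk (9*x-1) ≠ i then 1 else 0)
  else if x ∈ pB' then (if 9*x-3 ≤ (1+δ) * (1/2:ℝ)^i then 1 else 0)
  else if x ∈ pB'' then (if 9*x-4 ≤ 1 - (1+δ) * (1/2:ℝ)^i then 1 else 0)
  else if x ∈ pC then (if Even ⌊(2:ℝ)^i * ((9*x-5)/2)⌋ then δ else 0)
  else if x ∈ pC' then (if 9*x-7 ≤ 1-δ then 1 else 0)
  else if x ∈ pD then 0.2
  else 0

end

section AuxProof
open MeasureTheory Set

lemma measurableSet_brk_le (k : ℕ) : MeasurableSet {z : ℝ | brk z ≤ k} := by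
  have hset : {z : ℝ | brk z ≤ k} = Iio (1 - (1/2:ℝ)^k) ∪ Ici 1 := by
    ext z
    simp only [mem_setOf_eq, mem_union, mem_Iio, mem_Ici]
    constructor
    · intro h
      by_cases h1 : (1:ℝ) ≤ z
      · exact Or.inr h1
      · push_neg at h1
        obtain ⟨n, hn⟩ := exists_pow_lt_of_lt_one (x := 1 - z) (y := (1/2:ℝ))
          (by linarith) (by norm_num)
        have hne : {j : ℕ | z + (1/2 : ℝ) ^ j < 1}.Nonempty := ⟨n, by
          simp only [mem_setOf_eq]; linarith⟩
        have hmem : z + (1/2:ℝ) ^ (brk z) < 1 := by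
          have := Nat.sInf_mem hne
          simpa [brk, mem_setOf_eq] using this
        have hle : ((1/2:ℝ))^k ≤ (1/2)^(brk z) :=
          pow_le_pow_of_le_one (by norm_num) (by norm_num) h
        left; linarith
    · rintro (h | h)
      · exact Nat.sInf_le (by simp only [mem_setOf_eq]; linarith)
      · have : {j : ℕ | z + (1/2 : ℝ) ^ j < 1} = ∅ := by
          ext j; simp only [mem_setOf_eq, mem_empty_iff_false, iff_false, not_lt]
          have : (0:ℝ) < (1/2:ℝ)^j := by positivity
          linarith
        unfold brk; rw [this]; simp
  rw [hset]; exact (measurableSet_Iio).union measurableSet_Ici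

lemma measurable_brk : Measurable brk := by
  have h : ∀ k, MeasurableSet {z : ℝ | brk z = k} := by
    intro k
    match k with
    | 0 =>
      have : {z : ℝ | brk z = 0} = {z : ℝ | brk z ≤ 0} := by ext z; simp [Nat.le_zero]
      rw [this]; exact measurableSet_brk_le 0
    | (k+1) =>
      have : {z : ℝ | brk z = k+1} = {z : ℝ | brk z ≤ k+1} \ {z : ℝ | brk z ≤ k} := by
        ext z; simp only [mem_setOf_eq, mem_diff]; omega
      rw [this]; exact (measurableSet_brk_le (k+1)).diff (measurableSet_brk_le k)
  exact measurable_to_countable' fun k => h k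

lemma measurable_gFam (i : ℕ) (δ : ℝ) : Measurable (gFam i δ) := by
  unfold gFam
  have hbrk1 : Measurable fun x : ℝ => brk (9*x) :=
    measurable_brk.comp (by fun_prop)
  have hbrk2 : Measurable fun x : ℝ => brk (9*x-1) :=
    measurable_brk.comp (by fun_prop)
  have hfloor : Measurable fun x : ℝ => ⌊(2:ℝ)^i * ((9*x-5)/2)⌋ :=
    Measurable.floor (by fun_prop)
  repeat'
    apply Measurable.ite
  · exact measurableSet_Ico
  · exact hbrk1 (measurableSet_singleton i)
  · exact measurable_const
  · exact measurable_const
  · exact measurableSet_Ico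
  · exact (hbrk2 (measurableSet_singleton i)).compl
  · exact measurable_const
  · exact measurable_const
  · exact measurableSet_Ico
  · exact measurableSet_le (by fun_prop) measurable_const
  · exact measurable_const
  · exact measurable_const
  · exact measurableSet_Ico
  · exact measurableSet_le (by fun_prop) measurable_const
  · exact measurable_const
  · exact measurable_const
  · exact measurableSet_Ico
  · exact hfloor (show MeasurableSet {n : ℤ | Even n} from MeasurableSet.of_discrete)
  · exact measurable_const
  · exact measurable_const
  · exact measurableSet_Ico
  · exact measurableSet_le (by fun_prop) measurable_const
  · exact measurable_const
  · exact measurable_const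
  · exact measurableSet_Ico
  · exact measurable_const
  · exact measurable_const

lemma gFam_abs_le (i : ℕ) (δ : ℝ) (hδ : δ ∈ Set.Ioo (0:ℝ) 1) (x : ℝ) : |gFam i δ x| ≤ 1 := by
  unfold gFam
  obtain ⟨h0, h1⟩ := hδ
  split_ifs <;> rw [abs_le] <;> constructor <;> first | linarith | norm_num

lemma sum_if_even (M : ℕ) (u v : ℝ) :
    ∑ r ∈ Finset.range (2*M), (if Even r then u else v) = M * (u+v) := by
  induction M with
  | zero => simp
  | succ M ih =>
    have h : 2*(M+1) = (2*M) + 1 + 1 := by ring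
    rw [h, Finset.sum_range_succ, Finset.sum_range_succ, ih]
    rw [if_pos (even_two_mul M), if_neg (by simp [Nat.even_add_one, even_two_mul M])]
    push_cast; ring

lemma sum_range_mul (A B : ℕ) (f : ℕ → ℝ) :
    ∑ k ∈ Finset.range (A*B), f k
      = ∑ q ∈ Finset.range A, ∑ r ∈ Finset.range B, f (q*B + r) := by
  induction A with
  | zero => simp
  | succ A ih =>
    rw [Finset.sum_range_succ, ← ih, Nat.succ_mul, Finset.sum_range_add]

lemma intervalIntegrable_of_bounded {f : ℝ → ℝ} (hm : Measurable f) (C : ℝ)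
    (hb : ∀ x, |f x| ≤ C) (a b : ℝ) : IntervalIntegrable f volume a b := by
  rw [intervalIntegrable_iff]
  refine MeasureTheory.Integrable.mono' (g := fun _ => C)
    (integrableOn_const measure_Ioc_lt_top.ne) hm.aestronglyMeasurable.restrict ?_
  filter_upwards with x using by simpa [Real.norm_eq_abs] using hb x

noncomputable def Fc (i i' : ℕ) (δ δ' : ℝ) : ℝ → ℝ := fun t =>
  |(if Even ⌊(2:ℝ)^i * t⌋ then δ else 0) - (if Even ⌊(2:ℝ)^i' * t⌋ then δ' else 0)|

lemma measurable_Fc (i i' : ℕ) (δ δ' : ℝ) : Measurable (Fc i i' δ δ') := by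
  unfold Fc
  have h1 : Measurable fun t : ℝ => ⌊(2:ℝ)^i * t⌋ := Measurable.floor (by fun_prop)
  have h2 : Measurable fun t : ℝ => ⌊(2:ℝ)^i' * t⌋ := Measurable.floor (by fun_prop)
  apply Measurable.abs
  apply Measurable.sub
  · exact Measurable.ite (h1 (MeasurableSet.of_discrete (s := {n : ℤ | Even n})))
      measurable_const measurable_const
  · exact Measurable.ite (h2 (MeasurableSet.of_discrete (s := {n : ℤ | Even n})))
      measurable_const measurable_const

lemma Fc_bound (i i' : ℕ) (δ δ' : ℝ) (h : 0 ≤ δ) (h' : 0 ≤ δ') (t : ℝ) :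
    |Fc i i' δ δ' t| ≤ δ + δ' := by
  unfold Fc
  rw [abs_abs]
  split_ifs <;> rw [abs_le] <;> constructor <;> simp <;> linarith

/-- Core lower bound on `[0,1]`. -/
lemma core_integral (i i' : ℕ) (hi : 1 ≤ i) (hlt : i < i') (δ δ' : ℝ)
    (hδ : 0 ≤ δ) (hδ' : 0 ≤ δ') :
    (δ + δ') / 4 ≤ ∫ t in (0:ℝ)..1, Fc i i' δ δ' t := by
  set m : ℕ := i' - i with hm
  have hm1 : 1 ≤ m := by omega
  have hii : i' = i + m := by omega
  set N : ℕ := 2^i' with hN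
  have hN0 : (0:ℝ) < (N:ℝ) := by rw [hN]; positivity
  have hNpow : ((N:ℝ)) = (2:ℝ)^i' := by rw [hN]; push_cast; ring
  set c : ℕ → ℝ := fun k =>
    |(if Even (k / 2^m) then δ else 0) - (if Even k then δ' else 0)| with hc
  -- value on each dyadic piece
  have hpiece : ∀ k, k < N → ∫ t in ((k:ℝ)/N)..(((k:ℝ)+1)/N), Fc i i' δ δ' t
      = c k * (1/(N:ℝ)) := by
    intro k hk
    have hle : ((k:ℝ)/N) ≤ (((k:ℝ)+1)/N) :=
      div_le_div_of_nonneg_right (by linarith) (le_of_lt hN0)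
    rw [intervalIntegral.integral_of_le hle, MeasureTheory.integral_Ioc_eq_integral_Ioo]
    have heq : EqOn (Fc i i' δ δ') (fun _ => c k) (Ioo ((k:ℝ)/N) (((k:ℝ)+1)/N)) := by
      intro t ht
      obtain ⟨ht1, ht2⟩ := ht
      have hti' : ((k:ℝ)) < (2:ℝ)^i' * t ∧ (2:ℝ)^i' * t < (k:ℝ)+1 := by
        have h1 : (k:ℝ) < t * N := (div_lt_iff₀ hN0).mp ht1
        have h2 : t * (N:ℝ) < (k:ℝ)+1 := (lt_div_iff₀ hN0).mp ht2
        rw [← hNpow]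
        constructor <;> nlinarith
      have hfloor1 : ⌊(2:ℝ)^i' * t⌋ = (k:ℤ) := by
        rw [Int.floor_eq_iff]
        · exact ⟨by push_cast; linarith [hti'.1], by push_cast; linarith [hti'.2]⟩
      set q : ℕ := k / 2^m with hq
      have hdm := Nat.div_add_mod k (2^m)
      have hmod : k % 2^m < 2^m := Nat.mod_lt k (by positivity)
      have hq1 : (q:ℝ) * 2^m ≤ (k:ℝ) := by
        have h0 : q * 2^m ≤ k := Nat.div_mul_le_self k (2^m)
        exact_mod_cast h0
      have hq2 : (k:ℝ) + 1 ≤ ((q:ℝ)+1) * 2^m := by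
        have h1 : k < (q + 1) * 2^m :=
          (Nat.div_lt_iff_lt_mul (show 0 < 2^m by positivity)).mp (Nat.lt_succ_self q)
        have h2 : k + 1 ≤ (q+1) * 2^m := h1
        exact_mod_cast h2
      have h2m0 : (0:ℝ) < (2:ℝ)^m := by positivity
      have hti : ((q:ℝ)) < (2:ℝ)^i * t ∧ (2:ℝ)^i * t < (q:ℝ)+1 := by
        have hsplit : (2:ℝ)^i' * t = ((2:ℝ)^i * t) * 2^m := by
          rw [hii, pow_add]; ring
        constructor
        · nlinarith [hti'.1]
        · nlinarith [hti'.2]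
      have hfloor2 : ⌊(2:ℝ)^i * t⌋ = (q:ℤ) := by
        rw [Int.floor_eq_iff]
        exact ⟨by push_cast; linarith [hti.1], by push_cast; linarith [hti.2]⟩
      simp only [Fc, hfloor1, hfloor2, hc, Int.even_coe_nat]
      rfl
    rw [MeasureTheory.setIntegral_congr_fun measurableSet_Ioo heq,
      MeasureTheory.setIntegral_const, measureReal_def, Real.volume_Ioo]
    have hlen : ((k:ℝ)+1)/N - (k:ℝ)/N = 1/N := by field_simp; ring
    rw [hlen, ENNReal.toReal_ofReal (by positivity), smul_eq_mul, mul_comm]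
  -- integrability of Fc on each piece
  have hint : ∀ (a b : ℝ), IntervalIntegrable (Fc i i' δ δ') volume a b :=
    fun a b => intervalIntegrable_of_bounded (measurable_Fc i i' δ δ') (δ+δ')
      (Fc_bound i i' δ δ' hδ hδ') a b
  -- sum over pieces
  have hsum : ∑ k ∈ Finset.range N, ∫ t in ((k:ℝ)/N)..(((k:ℝ)+1)/N), Fc i i' δ δ' t
      = ∫ t in (0:ℝ)..1, Fc i i' δ δ' t := by
    have := intervalIntegral.sum_integral_adjacent_intervals
      (a := fun k : ℕ => (k:ℝ)/N) (n := N) (f := Fc i i' δ δ')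
      (fun k _ => hint _ _)
    simp only [Nat.cast_zero, zero_div] at this
    rw [div_self (ne_of_gt hN0)] at this
    convert this using 2
    push_cast; ring
  rw [← hsum]
  have hsum2 : ∑ k ∈ Finset.range N, ∫ t in ((k:ℝ)/N)..(((k:ℝ)+1)/N), Fc i i' δ δ' t
      = (∑ k ∈ Finset.range N, c k) * (1/(N:ℝ)) := by
    rw [Finset.sum_mul]
    exact Finset.sum_congr rfl fun k hk => hpiece k (Finset.mem_range.mp hk)
  rw [hsum2]
  -- compute the sum of c
  have hNsplit : N = (2 * 2^(i-1)) * (2 * 2^(m-1)) := by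
    rw [hN, hii]
    have e1 : 1 + (i-1) = i := by omega
    have e2 : 1 + (m-1) = m := by omega
    rw [show 2 * 2^(i-1) = 2^(1+(i-1)) by rw [pow_add]; ring,
        show 2 * 2^(m-1) = 2^(1+(m-1)) by rw [pow_add]; ring, e1, e2, pow_add]
  have hBsplit : (2:ℕ)^m = 2 * 2^(m-1) := by
    have e2 : 1 + (m-1) = m := by omega
    rw [show 2 * 2^(m-1) = 2^(1+(m-1)) by rw [pow_add]; ring, e2]
  have hcsum : ∑ k ∈ Finset.range N, c k
      = 2^(i-1) * (2^(m-1) * (|δ - δ'| + |δ|) + 2^(m-1) * (|(0:ℝ) - δ'| + 0)) := by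
    rw [hNsplit, sum_range_mul]
    have hinner : ∀ q ∈ Finset.range (2 * 2^(i-1)),
        ∑ r ∈ Finset.range (2 * 2^(m-1)), c (q * (2 * 2^(m-1)) + r)
        = if Even q then 2^(m-1) * (|δ - δ'| + |δ|) else 2^(m-1) * (|(0:ℝ) - δ'| + 0) := by
      intro q _
      have hstep : ∀ r ∈ Finset.range (2 * 2^(m-1)), c (q * (2 * 2^(m-1)) + r)
          = (if Even r then |(if Even q then δ else 0) - δ'|
             else |(if Even q then δ else 0) - 0|) := by
        intro r hr
        rw [Finset.mem_range] at hr
        rw [← hBsplit] at hr ⊢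
        have hdiv : (q * 2^m + r) / 2^m = q := by
          rw [mul_comm q, Nat.mul_add_div (by positivity), Nat.div_eq_of_lt hr, Nat.add_zero]
        have hpar : Even (q * 2^m + r) ↔ Even r := by
          have hqB : Even (q * 2^m) := by
            apply Even.mul_left
            exact (Nat.even_pow' (by omega)).mpr even_two
          rw [Nat.even_add]
          simp [hqB]
        simp only [hc, hdiv, hpar]
        split_ifs with h1 h2 h2 <;> simp
      rw [Finset.sum_congr rfl hstep, sum_if_even]
      split_ifs with h <;> push_cast <;> simp [sub_zero] <;> ring
    rw [Finset.sum_congr rfl hinner, sum_if_even]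
    push_cast; ring
  rw [hcsum]
  have habs : |δ| = δ := abs_of_nonneg hδ
  have habs2 : |(0:ℝ) - δ'| = δ' := by rw [zero_sub, abs_neg, abs_of_nonneg hδ']
  rw [habs, habs2]
  have hNval : (N:ℝ) = 4 * (2^(i-1) * 2^(m-1)) := by
    rw [hNpow, hii]
    have : (i-1) + (m-1) + 2 = i + m := by omega
    rw [← this, pow_add, pow_add]; ring
  rw [hNval]
  have hP : (0:ℝ) < 2^(i-1) * 2^(m-1) := by positivity
  rw [div_le_iff₀ (by norm_num : (0:ℝ) < 4)]
  have hgoal : 2^(i-1) * ((2:ℝ)^(m-1) * (|δ - δ'| + δ) + 2^(m-1) * (δ' + 0))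
      * (1 / (4 * (2^(i-1) * 2^(m-1)))) * 4
      = |δ - δ'| + δ + δ' := by
    field_simp
    ring
  rw [hgoal]
  have := abs_nonneg (δ - δ')
  linarith

lemma gFam_C (i : ℕ) (δ : ℝ) (x : ℝ) (hx : x ∈ Set.Ioo (5/9:ℝ) (7/9)) :
    gFam i δ x = if Even ⌊(2:ℝ)^i * ((9*x-5)/2)⌋ then δ else 0 := by
  obtain ⟨h1, h2⟩ := hx
  have nA : x ∉ pA := by simp only [pA, mem_Ico]; push_neg; intro _; linarith
  have nA' : x ∉ pA' := by simp only [pA', mem_Ico]; push_neg; intro _; linarith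
  have nB' : x ∉ pB' := by simp only [pB', mem_Ico]; push_neg; intro _; linarith
  have nB'' : x ∉ pB'' := by simp only [pB'', mem_Ico]; push_neg; intro _; linarith
  have hC : x ∈ pC := by simp only [pC, mem_Ico]; exact ⟨le_of_lt h1, h2⟩
  simp only [gFam, if_neg nA, if_neg nA', if_neg nB', if_neg nB'', if_pos hC]

lemma gFam_B' (i : ℕ) (δ : ℝ) (x : ℝ) (hx : x ∈ Set.Ioo (3/9:ℝ) (4/9)) :
    gFam i δ x = if 9*x-3 ≤ (1+δ) * (1/2:ℝ)^i then 1 else 0 := by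
  obtain ⟨h1, h2⟩ := hx
  have nA : x ∉ pA := by simp only [pA, mem_Ico]; push_neg; intro _; linarith
  have nA' : x ∉ pA' := by simp only [pA', mem_Ico]; push_neg; intro _; linarith
  have hB' : x ∈ pB' := by simp only [pB', mem_Ico]; exact ⟨le_of_lt h1, h2⟩
  simp only [gFam, if_neg nA, if_neg nA', if_pos hB']

/-- Main bound, in the orientation `i < i'`. -/
lemma dist_gFam_aux (i i' : ℕ) (hi : 1 ≤ i) (hlt : i < i')
    (δ δ' : ℝ) (hδ : δ ∈ Set.Ioo (0:ℝ) 1) (hδ' : δ' ∈ Set.Ioo (0:ℝ) 1) :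
    (δ + δ') / 18 < ∫ x in (0:ℝ)..1, |gFam i δ x - gFam i' δ' x| := by
  have hi' : 1 ≤ i' := by omega
  set f : ℝ → ℝ := fun x => |gFam i δ x - gFam i' δ' x| with hf
  have hmf : Measurable f := ((measurable_gFam i δ).sub (measurable_gFam i' δ')).abs
  have hbf : ∀ x, |f x| ≤ 2 := by
    intro x
    rw [hf, abs_abs]
    calc |gFam i δ x - gFam i' δ' x| ≤ |gFam i δ x| + |gFam i' δ' x| := abs_sub _ _
    _ ≤ 2 := by linarith [gFam_abs_le i δ hδ x, gFam_abs_le i' δ' hδ' x]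
  have hint : ∀ a b : ℝ, IntervalIntegrable f volume a b :=
    intervalIntegrable_of_bounded hmf 2 hbf
  have hnng : ∀ a b : ℝ, a ≤ b → 0 ≤ ∫ x in a..b, f x := fun a b hab =>
    intervalIntegral.integral_nonneg hab (fun u _ => abs_nonneg _)
  have e1 := intervalIntegral.integral_add_adjacent_intervals
    (hint 0 (3/9)) (hint (3/9) (4/9))
  have e2 := intervalIntegral.integral_add_adjacent_intervals
    (hint 0 (4/9)) (hint (4/9) (5/9))
  have e3 := intervalIntegral.integral_add_adjacent_intervals
    (hint 0 (5/9)) (hint (5/9) (7/9))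
  have e4 := intervalIntegral.integral_add_adjacent_intervals
    (hint 0 (7/9)) (hint (7/9) 1)
  -- thresholds in the B' part
  set a : ℝ := (1+δ) * (1/2:ℝ)^i with halpha
  set b : ℝ := (1+δ') * (1/2:ℝ)^i' with hbeta
  have hp0 : (0:ℝ) < (1/2:ℝ)^i := by positivity
  have hp0' : (0:ℝ) < (1/2:ℝ)^i' := by positivity
  have hp2 : ((1/2:ℝ))^i' ≤ (1/2:ℝ)^(i+1) :=
    pow_le_pow_of_le_one (by norm_num) (by norm_num) (by omega)
  have hp3 : ((1/2:ℝ))^(i+1) = (1/2:ℝ)^i * (1/2) := pow_succ _ _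
  have hp4 : ((1/2:ℝ))^i ≤ (1/2:ℝ)^1 :=
    pow_le_pow_of_le_one (by norm_num) (by norm_num) hi
  have hba : b < a := by
    rw [halpha, hbeta]
    nlinarith [hδ.1, hδ'.1, hδ'.2]
  have hb0 : (0:ℝ) < b := by rw [hbeta]; have := hδ'.1; nlinarith
  have ha1 : a < 1 := by
    rw [halpha]
    have := hδ.2
    norm_num at hp4 ⊢
    nlinarith
  -- B' part
  have hBp : (a - b)/9 ≤ ∫ x in (3/9:ℝ)..(4/9), f x := by
    have c1 : (3/9:ℝ) ≤ (3+b)/9 := by linarith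
    have c2 : ((3+b)/9:ℝ) ≤ (3+a)/9 := by linarith
    have c3 : ((3+a)/9:ℝ) ≤ 4/9 := by linarith
    have s1 := intervalIntegral.integral_add_adjacent_intervals
      (hint (3/9) ((3+b)/9)) (hint ((3+b)/9) ((3+a)/9))
    have s2 := intervalIntegral.integral_add_adjacent_intervals
      (hint (3/9) ((3+a)/9)) (hint ((3+a)/9) (4/9))
    have hmid : ∫ x in ((3+b)/9:ℝ)..((3+a)/9), f x = (a-b)/9 := by
      rw [intervalIntegral.integral_of_le c2]
      have heq : EqOn f (fun _ => (1:ℝ)) (Ioc ((3+b)/9:ℝ) ((3+a)/9)) := by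
        intro x hx
        obtain ⟨hx1, hx2⟩ := hx
        have hxo : x ∈ Set.Ioo (3/9:ℝ) (4/9) := ⟨by linarith, by linarith⟩
        rw [hf]
        simp only
        rw [gFam_B' i δ x hxo, gFam_B' i' δ' x hxo, ← halpha, ← hbeta,
          if_pos (by linarith : 9*x-3 ≤ a), if_neg (by push_neg; linarith : ¬ (9*x-3 ≤ b))]
        norm_num
      rw [MeasureTheory.setIntegral_congr_fun measurableSet_Ioc heq,
        MeasureTheory.setIntegral_const, measureReal_def, Real.volume_Ioc,
        ENNReal.toReal_ofReal (by linarith), smul_eq_mul, mul_one]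
      ring
    have n1 := hnng (3/9) ((3+b)/9) c1
    have n2 := hnng ((3+a)/9) (4/9) c3
    linarith
  -- C part
  have hCp : (δ + δ')/18 ≤ ∫ x in (5/9:ℝ)..(7/9), f x := by
    have heq : ∫ x in (5/9:ℝ)..(7/9), f x
        = ∫ x in (5/9:ℝ)..(7/9), Fc i i' δ δ' ((9/2)*x + (-(5/2))) := by
      rw [intervalIntegral.integral_of_le (by norm_num),
        intervalIntegral.integral_of_le (by norm_num),
        MeasureTheory.integral_Ioc_eq_integral_Ioo,
        MeasureTheory.integral_Ioc_eq_integral_Ioo]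
      apply MeasureTheory.setIntegral_congr_fun measurableSet_Ioo
      intro x hx
      have harg : (9/2:ℝ)*x + (-(5/2)) = (9*x-5)/2 := by ring
      rw [hf]
      simp only
      rw [gFam_C i δ x hx, gFam_C i' δ' x hx, harg]
      rfl
    rw [heq, intervalIntegral.integral_comp_mul_add (Fc i i' δ δ')
      (show (9/2:ℝ) ≠ 0 by norm_num) (-(5/2))]
    have hb1 : (9/2:ℝ) * (5/9) + (-(5/2)) = 0 := by norm_num
    have hb2 : (9/2:ℝ) * (7/9) + (-(5/2)) = 1 := by norm_num
    rw [hb1, hb2, smul_eq_mul]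
    have hcore := core_integral i i' hi hlt δ δ' (le_of_lt hδ.1) (le_of_lt hδ'.1)
    have h29 : ((9/2:ℝ))⁻¹ = 2/9 := by norm_num
    rw [h29]
    linarith
  have hsplit : ∫ x in (0:ℝ)..1, f x
      = (∫ x in (0:ℝ)..(3/9), f x) + (∫ x in (3/9:ℝ)..(4/9), f x)
        + (∫ x in (4/9:ℝ)..(5/9), f x) + (∫ x in (5/9:ℝ)..(7/9), f x)
        + (∫ x in (7/9:ℝ)..1, f x) := by
    rw [← e4, ← e3, ← e2, ← e1]
  rw [hsplit]
  have n1 := hnng 0 (3/9) (by norm_num)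
  have n2 := hnng (4/9) (5/9) (by norm_num)
  have n3 := hnng (7/9) 1 (by norm_num)
  linarith


end AuxProof

/-- For `i ≠ i'` (both `≥ 1`) and `δ, δ' ∈ (0,1)`,
`‖g_{i,δ} − g_{i',δ'}‖₁ > (δ + δ')/18`. -/
theorem dist_gFam_gFam (i i' : ℕ) (hi : 1 ≤ i) (hi' : 1 ≤ i') (hne : i ≠ i')
    (δ δ' : ℝ) (hδ : δ ∈ Set.Ioo (0:ℝ) 1) (hδ' : δ' ∈ Set.Ioo (0:ℝ) 1) :
    (δ + δ') / 18 < ∫ x in (0:ℝ)..1, |gFam i δ x - gFam i' δ' x| := by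
  rcases Nat.lt_or_ge i i' with hlt | hge
  · exact dist_gFam_aux i i' hi hlt δ δ' hδ hδ'
  · have hlt : i' < i := by omega
    have h := dist_gFam_aux i' i hi' hlt δ' δ hδ' hδ
    have hswap : ∫ x in (0:ℝ)..1, |gFam i δ x - gFam i' δ' x|
        = ∫ x in (0:ℝ)..1, |gFam i' δ' x - gFam i δ x| :=
      intervalIntegral.integral_congr (fun x _ => abs_sub_comm _ _)
    rw [hswap]
    linarith
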